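/- Let X be a separable metrizable topological space. Then every compact convex subset K of the function space SC_p(X) is metrizable. -/

import Mathlib

open Set Filter Topology Cardinal

/-- A function is scatteredly continuous if every nonempty subset `A` of the domain
contains a point at which the restriction `f|A` is continuous. -/
def ScatCont {X Y : Type*} [TopologicalSpace X] [TopologicalSpace Y] (f : X → Y) : Prop :=
  ∀ A : Set X, A.Nonempty → ∃ a ∈ A, ContinuousWithinAt f A a

/-- A family of functions is scatteredly continuous if every nonempty subset `A` of the domain
contains a point at which all restrictions `f|A`, `f ∈ F`, are continuous. -/
def ScatContFam {X Y : Type*} [TopologicalSpace X] [TopologicalSpace Y]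
    (F : Set (X → Y)) : Prop :=
  ∀ A : Set X, A.Nonempty → ∃ a ∈ A, ∀ f ∈ F, ContinuousWithinAt f A a

/-- A function is weakly discontinuous if every subset `A` of the domain contains an
open (in `A`) dense (in `A`) subset `U` such that `f|U` is continuous. -/
def WeaklyDisc {X Y : Type*} [TopologicalSpace X] [TopologicalSpace Y] (f : X → Y) : Prop :=
  ∀ A : Set X, ∃ U : Set X, U ⊆ A ∧ (∃ V : Set X, IsOpen V ∧ U = V ∩ A) ∧
    A ⊆ closure U ∧ ContinuousOn f U

/-- A family of functions is weakly discontinuous if every subset `A` of the domain contains an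
open (in `A`) dense (in `A`) subset `U` such that every `f|U`, `f ∈ F`, is continuous. -/
def WeaklyDiscFam {X Y : Type*} [TopologicalSpace X] [TopologicalSpace Y]
    (F : Set (X → Y)) : Prop :=
  ∀ A : Set X, ∃ U : Set X, U ⊆ A ∧ (∃ V : Set X, IsOpen V ∧ U = V ∩ A) ∧
    A ⊆ closure U ∧ ∀ f ∈ F, ContinuousOn f U

/-- The decomposition number of a family `F` of functions: the smallest cardinality of a
cover `𝒞` of `X` such that every `f ∈ F` restricted to every `C ∈ 𝒞` is continuous. -/
noncomputable def Dec {X Y : Type*} [TopologicalSpace X] [TopologicalSpace Y]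
    (F : Set (X → Y)) : Cardinal :=
  sInf { c : Cardinal | ∃ 𝒞 : Set (Set X), c = #𝒞 ∧ ⋃₀ 𝒞 = Set.univ ∧
    ∀ C ∈ 𝒞, ∀ f ∈ F, ContinuousOn f C }

/-- The Lindelöf number: the smallest infinite cardinal `κ` such that every open cover
has a subcover of cardinality `≤ κ`. -/
noncomputable def lindelofNum (X : Type*) [TopologicalSpace X] : Cardinal :=
  sInf { κ : Cardinal | Cardinal.aleph0 ≤ κ ∧ ∀ 𝒰 : Set (Set X), (∀ U ∈ 𝒰, IsOpen U) →
    ⋃₀ 𝒰 = Set.univ → ∃ 𝒱 ⊆ 𝒰, #𝒱 ≤ κ ∧ ⋃₀ 𝒱 = Set.univ }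

/-- The hereditary Lindelöf number: the supremum of the Lindelöf numbers of all subspaces. -/
noncomputable def heredLindelofNum (X : Type*) [TopologicalSpace X] : Cardinal :=
  ⨆ Z : Set X, lindelofNum Z

/-- A network for a topological space: a family of (arbitrary) sets such that every open
neighbourhood of every point contains a member of the family containing that point. -/
def IsNetwork {X : Type*} [TopologicalSpace X] (N : Set (Set X)) : Prop :=
  ∀ (x : X) (U : Set X), IsOpen U → x ∈ U → ∃ n ∈ N, x ∈ n ∧ n ⊆ U

/-- The network weight: the smallest infinite cardinality of a network. -/
noncomputable def netWt (X : Type*) [TopologicalSpace X] : Cardinal :=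
  sInf { c : Cardinal | ∃ N : Set (Set X), IsNetwork N ∧ c = max #N Cardinal.aleph0 }

/-- The weight: the smallest infinite cardinality of a base of the topology. -/
noncomputable def wt (X : Type*) [TopologicalSpace X] : Cardinal :=
  sInf { c : Cardinal | ∃ B : Set (Set X), TopologicalSpace.IsTopologicalBasis B ∧
    c = max #B Cardinal.aleph0 }

/-- The density: the smallest cardinality of a dense subset. -/
noncomputable def dens (X : Type*) [TopologicalSpace X] : Cardinal :=
  sInf { c : Cardinal | ∃ D : Set X, Dense D ∧ c = #D }

/-- The hereditary density: the supremum of densities of all subspaces. -/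
noncomputable def heredDens (X : Type*) [TopologicalSpace X] : Cardinal :=
  ⨆ Z : Set X, dens Z

/-- The spread: the supremum of cardinalities of discrete subspaces. -/
noncomputable def spread (X : Type*) [TopologicalSpace X] : Cardinal :=
  sSup { c : Cardinal | ∃ D : Set X, DiscreteTopology D ∧ c = #D }

/-- A subset `C` of a topological vector space over `ℝ` is σ-convex if for every sequence
`(x n)` in `C` and every sequence `(t n)` of positive reals with `∑ n, t n = 1`, the series
`∑ n, t n • x n` converges to a point of `C`. -/
def SigmaConvex {L : Type*} [AddCommGroup L] [Module ℝ L] [TopologicalSpace L]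
    (C : Set L) : Prop :=
  ∀ (x : ℕ → L) (t : ℕ → ℝ), (∀ n, x n ∈ C) → (∀ n, 0 < t n) →
    Tendsto (fun N => ∑ n ∈ Finset.range N, t n) atTop (𝓝 1) →
    ∃ c ∈ C, Tendsto (fun N => ∑ n ∈ Finset.range N, t n • x n) atTop (𝓝 c)

/-- A topological space has countable tightness if every point in the closure of a set `A`
lies in the closure of a countable subset of `A`. -/
def CountablyTight (X : Type*) [TopologicalSpace X] : Prop :=
  ∀ (A : Set X) (a : X), a ∈ closure A → ∃ B ⊆ A, B.Countable ∧ a ∈ closure B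

namespace SCPaux

open Metric Set Filter Topology

variable {X : Type*} [MetricSpace X]

/-- `oscGE h A x d`: in every ball around `x` there is a pair of points of `A` on which
`h` differs by at least `d`. -/
def oscGE (h : X → ℝ) (A : Set X) (x : X) (d : ℝ) : Prop :=
  ∀ r : ℝ, 0 < r → ∃ u ∈ A ∩ Metric.ball x r, ∃ w ∈ A ∩ Metric.ball x r, d ≤ |h u - h w|

theorem oscGE_mono {h : X → ℝ} {A : Set X} {x : X} {d d' : ℝ} (hd : d' ≤ d)
    (H : oscGE h A x d) : oscGE h A x d' := by
  intro r hr
  obtain ⟨u, hu, w, hw, h1⟩ := H r hr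
  exact ⟨u, hu, w, hw, hd.trans h1⟩

theorem oscGE_mono_set {h : X → ℝ} {A B : Set X} {x : X} {d : ℝ} (hBA : B ⊆ A)
    (H : oscGE h B x d) : oscGE h A x d := by
  intro r hr
  obtain ⟨u, hu, w, hw, h1⟩ := H r hr
  exact ⟨u, ⟨hBA hu.1, hu.2⟩, w, ⟨hBA hw.1, hw.2⟩, h1⟩

theorem oscGE_of_not_cwa {f : X → ℝ} {B : Set X} {x : X} (hx : x ∈ B)
    (h : ¬ ContinuousWithinAt f B x) : ∃ d : ℝ, 0 < d ∧ oscGE f B x d := by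
  rw [Metric.continuousWithinAt_iff] at h
  push_neg at h
  obtain ⟨ε, hε, hd⟩ := h
  refine ⟨ε, hε, fun r hr => ?_⟩
  obtain ⟨z, hzB, hzr, hzd⟩ := hd r hr
  refine ⟨z, ⟨hzB, hzr⟩, x, ⟨hx, mem_ball_self hr⟩, ?_⟩
  rwa [Real.dist_eq] at hzd

/-- local boundedness of `v` on `A` near `x`. -/
def LocBdd (v : X → ℝ) (A : Set X) (x : X) : Prop :=
  ∃ r : ℝ, 0 < r ∧ ∃ C : ℝ, ∀ z ∈ A ∩ Metric.ball x r, |v z| ≤ C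

theorem oscGE_mix {h v : X → ℝ} {A : Set X} {x : X} {θ r C s : ℝ}
    (hosc : oscGE h A x θ) (hr : 0 < r) (hC : ∀ z ∈ A ∩ Metric.ball x r, |v z| ≤ C)
    (hs : 0 ≤ s) : oscGE (fun y => h y + s * v y) A x (θ - s * (2 * C)) := by
  intro ρ hρ
  obtain ⟨u, hu, w, hw, h1⟩ := hosc (min ρ r) (lt_min hρ hr)
  have hu' : u ∈ A ∩ Metric.ball x ρ :=
    ⟨hu.1, Metric.ball_subset_ball (min_le_left _ _) hu.2⟩
  have hw' : w ∈ A ∩ Metric.ball x ρ :=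
    ⟨hw.1, Metric.ball_subset_ball (min_le_left _ _) hw.2⟩
  refine ⟨u, hu', w, hw', ?_⟩
  have hub : u ∈ A ∩ Metric.ball x r := ⟨hu.1, Metric.ball_subset_ball (min_le_right _ _) hu.2⟩
  have hwb : w ∈ A ∩ Metric.ball x r := ⟨hw.1, Metric.ball_subset_ball (min_le_right _ _) hw.2⟩
  have h2 := hC u hub
  have h3 := hC w hwb
  have habs : |s * v u - s * v w| ≤ s * (2 * C) := by
    have he : |s * v u - s * v w| = s * |v u - v w| := by
      rw [← mul_sub, abs_mul, abs_of_nonneg hs]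
    have h6 : |v u - v w| ≤ |v u| + |v w| := abs_sub _ _
    rw [he]
    nlinarith
  have hkey := abs_sub_abs_le_abs_sub (h u - h w) ((h u + s * v u) - (h w + s * v w))
  have heq : (h u - h w) - ((h u + s * v u) - (h w + s * v w)) = -(s * v u - s * v w) := by ring
  rw [heq, abs_neg] at hkey
  linarith

theorem not_oscGE_iff {h : X → ℝ} {A : Set X} {x : X} {d : ℝ} :
    ¬ oscGE h A x d ↔ ∃ r : ℝ, 0 < r ∧ ∀ u ∈ A ∩ Metric.ball x r, ∀ w ∈ A ∩ Metric.ball x r,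
      |h u - h w| < d := by
  unfold oscGE
  push_neg
  rfl

theorem bad_unique {h v : X → ℝ} {A : Set X} {x : X} {θ : ℝ} (hxA : x ∈ A)
    (hnb : ¬ LocBdd v A x) :
    {s : ℝ | ¬ oscGE (fun y => h y + s * v y) A x θ}.Subsingleton := by
  intro s₁ hs₁ s₂ hs₂
  by_contra hne
  rw [Set.mem_setOf_eq, not_oscGE_iff] at hs₁ hs₂
  obtain ⟨r₁, hr₁, H₁⟩ := hs₁
  obtain ⟨r₂, hr₂, H₂⟩ := hs₂
  apply hnb
  refine ⟨min r₁ r₂, lt_min hr₁ hr₂, |v x| + 2 * θ / |s₁ - s₂|, fun z hz => ?_⟩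
  have hz1 : z ∈ A ∩ Metric.ball x r₁ := ⟨hz.1, Metric.ball_subset_ball (min_le_left _ _) hz.2⟩
  have hz2 : z ∈ A ∩ Metric.ball x r₂ := ⟨hz.1, Metric.ball_subset_ball (min_le_right _ _) hz.2⟩
  have hx1 : x ∈ A ∩ Metric.ball x r₁ := ⟨hxA, Metric.mem_ball_self hr₁⟩
  have hx2 : x ∈ A ∩ Metric.ball x r₂ := ⟨hxA, Metric.mem_ball_self hr₂⟩
  have e₁ := H₁ z hz1 x hx1
  have e₂ := H₂ z hz2 x hx2
  have hsne : s₁ - s₂ ≠ 0 := sub_ne_zero.2 hne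
  have habs : 0 < |s₁ - s₂| := abs_pos.2 hsne
  have key : |s₁ - s₂| * |v z - v x| < 2 * θ := by
    have heq : (s₁ - s₂) * (v z - v x) =
        ((h z + s₁ * v z) - (h x + s₁ * v x)) - ((h z + s₂ * v z) - (h x + s₂ * v x)) := by ring
    have h7 : |(s₁ - s₂) * (v z - v x)| ≤ |(h z + s₁ * v z) - (h x + s₁ * v x)| +
        |(h z + s₂ * v z) - (h x + s₂ * v x)| := by
      rw [heq]; exact abs_sub _ _
    rw [abs_mul] at h7
    linarith
  have h8 : |v z - v x| < 2 * θ / |s₁ - s₂| := by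
    rw [lt_div_iff₀ habs]
    nlinarith
  have h9 : |v z| - |v x| ≤ |v z - v x| := abs_sub_abs_le_abs_sub _ _
  linarith

theorem exists_good_s {ε : ℝ} (hε : 0 < ε) (T : Finset ℕ) (goal : ℕ → ℝ → Prop)
    (hT : ∀ j ∈ T, (∃ b : ℝ, 0 < b ∧ ∀ s : ℝ, 0 < s → s ≤ b → goal j s) ∨
      {s : ℝ | ¬ goal j s}.Subsingleton) :
    ∃ s : ℝ, 0 < s ∧ s ≤ ε ∧ ∀ j ∈ T, goal j s := by
  classical
  -- first, a common lower threshold for all "case 1" indices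
  have hb : ∃ b : ℝ, 0 < b ∧ b ≤ ε ∧ ∀ j ∈ T,
      ({s : ℝ | ¬ goal j s}.Subsingleton ∨ ∀ s : ℝ, 0 < s → s ≤ b → goal j s) := by
    induction T using Finset.induction with
    | empty => exact ⟨ε, hε, le_refl _, by simp⟩
    | insert j T' hnotmem ih =>
      obtain ⟨b, hb0, hbε, hball⟩ := ih (fun i hi => hT i (Finset.mem_insert_of_mem hi))
      rcases hT j (Finset.mem_insert_self _ _) with ⟨b', hb'0, hb'⟩ | hsub
      · refine ⟨min b b', lt_min hb0 hb'0, (min_le_left _ _).trans hbε, fun i hi => ?_⟩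
        rcases Finset.mem_insert.1 hi with rfl | hi'
        · exact Or.inr (fun s hs hsb => hb' s hs (hsb.trans (min_le_right _ _)))
        · rcases hball i hi' with hc | hc
          · exact Or.inl hc
          · exact Or.inr (fun s hs hsb => hc s hs (hsb.trans (min_le_left _ _)))
      · refine ⟨b, hb0, hbε, fun i hi => ?_⟩
        rcases Finset.mem_insert.1 hi with rfl | hi'
        · exact Or.inl hsub
        · exact hball i hi'
  obtain ⟨b, hb0, hbε, hball⟩ := hb
  -- candidates b * (1/2)^(n+1); only finitely many can be rejected
  by_contra hcon
  push_neg at hcon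
  have hc : ∀ n : ℕ, ∃ j ∈ T, ¬ goal j (b * (2⁻¹ : ℝ) ^ (n + 1)) := by
    intro n
    have hpos : 0 < b * (2⁻¹ : ℝ) ^ (n + 1) := by positivity
    have hle : b * (2⁻¹ : ℝ) ^ (n + 1) ≤ ε := by
      have h1 : (2⁻¹ : ℝ) ^ (n + 1) ≤ 1 := by
        apply pow_le_one₀ <;> norm_num
      nlinarith
    obtain ⟨j, hj, hgj⟩ := hcon _ hpos hle
    exact ⟨j, hj, hgj⟩
  choose F hF hgF using hc
  have : ∃ n m : ℕ, n ≠ m ∧ F n = F m := by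
    have : ∃ n m : ℕ, n ≠ m ∧ (⟨F n, hF n⟩ : {j // j ∈ T}) = ⟨F m, hF m⟩ :=
      Finite.exists_ne_map_eq_of_infinite _
    obtain ⟨n, m, hnm, he⟩ := this
    exact ⟨n, m, hnm, by simpa using he⟩
  obtain ⟨n, m, hnm, hFe⟩ := this
  rcases hball (F n) (hF n) with hsub | hlow
  · have h1 : (b * (2⁻¹ : ℝ) ^ (n + 1)) = (b * (2⁻¹ : ℝ) ^ (m + 1)) := by
      apply hsub
      · exact hgF n
      · rw [hFe]; exact hgF m
    have hpe : (2⁻¹ : ℝ) ^ (n + 1) = (2⁻¹ : ℝ) ^ (m + 1) :=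
      mul_left_cancel₀ hb0.ne' h1
    have : n + 1 = m + 1 := pow_right_injective₀ (by norm_num) (by norm_num) hpe
    omega
  · exact hgF n (hlow _ (by positivity) (by
      have h1 : (2⁻¹ : ℝ) ^ (n + 1) ≤ 1 := by apply pow_le_one₀ <;> norm_num
      nlinarith))

/-! ### The inductive construction -/

theorem theta_succ_le {γ : ℝ} (hγ : 0 < γ) (a : ℕ) :
    γ * (1 + (2⁻¹ : ℝ) ^ (a + 1)) ≤ γ * (1 + (2⁻¹ : ℝ) ^ a) := by
  have h1 : (2⁻¹ : ℝ) ^ (a + 1) ≤ (2⁻¹ : ℝ) ^ a := by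
    rw [pow_succ]
    have : (0:ℝ) < (2⁻¹ : ℝ) ^ a := by positivity
    nlinarith
  nlinarith

structure StC (X : Type*) where
  h : X → ℝ
  nds : ℕ → Option (X × ℝ)

variable (K : Set (X → ℝ)) (A : Set X)

def Inv (M : ℕ) (S : StC X) : Prop :=
  S.h ∈ K ∧ (∀ i, M < i → S.nds i = none) ∧
  ∀ i p γ, S.nds i = some (p, γ) →
    1 ≤ i ∧ i ≤ M ∧ p ∈ A ∧ 0 < γ ∧ γ ≤ 1 ∧ oscGE S.h A p (γ * (1 + (2⁻¹ : ℝ) ^ (M - i)))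

def task (m : ℕ) : ℕ × ℕ := ((Nat.unpair m).1, (Nat.unpair (Nat.unpair m).2).1)

def Step (M : ℕ) (S S' : StC X) : Prop :=
  (∀ i, i ≠ M + 1 → S'.nds i = S.nds i) ∧
  (∃ g' ∈ K, ∃ s : ℝ, 0 ≤ s ∧ s ≤ (2⁻¹ : ℝ) ^ (M + 1) ∧
    S'.h = fun x => S.h x + s * (g' x - S.h x)) ∧
  (∀ i p γ, S.nds i = some (p, γ) → |S'.h p - S.h p| ≤ (2⁻¹ : ℝ) ^ (M + 1)) ∧
  ((∀ i, S.nds i = none) → A.Nonempty → ∃ e, S'.nds (M + 1) = some e) ∧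
  (∀ i k p γ, task (M + 1) = (i, k) → S.nds i = some (p, γ) →
    (2⁻¹ : ℝ) ^ (M + 1) ≤ γ / 32 →
    ∃ q δ, S'.nds (M + 1) = some (q, δ) ∧ dist q p < 1 / (k + 1 : ℝ) ∧
      γ / 4 ≤ |S'.h q - S'.h p|)

theorem inv_mk {M : ℕ} {S : StC X} (hS : Inv K A M S) (h' : X → ℝ) (hh'K : h' ∈ K)
    (hold : ∀ i p γ, S.nds i = some (p, γ) → oscGE h' A p (γ * (1 + (2⁻¹ : ℝ) ^ (M + 1 - i))))
    (newnd : Option (X × ℝ))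
    (hnew : ∀ p γ, newnd = some (p, γ) → p ∈ A ∧ 0 < γ ∧ γ ≤ 1 ∧ oscGE h' A p (γ * 2)) :
    Inv K A (M + 1) ⟨h', fun i => if i = M + 1 then newnd else S.nds i⟩ := by
  obtain ⟨hhK, hnone, hnds⟩ := hS
  refine ⟨hh'K, ?_, ?_⟩
  · intro i hi
    simp only
    rw [if_neg (by omega)]
    exact hnone i (by omega)
  · intro i p γ hi
    simp only at hi
    by_cases hieq : i = M + 1
    · rw [if_pos hieq] at hi
      obtain ⟨hpA, hγ0, hγ1, hosc⟩ := hnew p γ hi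
      subst hieq
      refine ⟨by omega, le_refl _, hpA, hγ0, hγ1, ?_⟩
      rw [Nat.sub_self, pow_zero]
      exact oscGE_mono (by nlinarith) hosc
    · rw [if_neg hieq] at hi
      obtain ⟨h1, h2, h3, h4, h5, _⟩ := hnds i p γ hi
      exact ⟨h1, by omega, h3, h4, h5, hold i p γ hi⟩

theorem hold_of_eq {M : ℕ} {S : StC X} (hS : Inv K A M S) :
    ∀ i p γ, S.nds i = some (p, γ) → oscGE S.h A p (γ * (1 + (2⁻¹ : ℝ) ^ (M + 1 - i))) := by
  intro i p γ hi
  obtain ⟨_, _, _, hγ0, _, hosc⟩ := hS.2.2 i p γ hi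
  have hiM : i ≤ M := (hS.2.2 i p γ hi).2.1
  have : M + 1 - i = (M - i) + 1 := by omega
  rw [this]
  exact oscGE_mono (theta_succ_le hγ0 _) hosc


theorem selfNode {h : X → ℝ} {A : Set X} {y : X} (hyA : y ∈ A)
    (hnc : ¬ ContinuousWithinAt h A y) :
    ∃ γn : ℝ, 0 < γn ∧ γn ≤ 1 ∧ oscGE h A y (γn * 2) := by
  obtain ⟨δ, hδ, hosc⟩ := oscGE_of_not_cwa hyA hnc
  refine ⟨min (δ / 2) 1, by positivity, min_le_right _ _, oscGE_mono ?_ hosc⟩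
  have h1 := min_le_left (δ / 2) 1
  linarith

theorem oscGE_perturb {f' h : X → ℝ} {A : Set X} {q : X} {s ε' : ℝ}
    (hosc : oscGE f' A q ε') (hc : ContinuousWithinAt h A q)
    (hs0 : 0 < s) (hs1 : s ≤ 1) (hε' : 0 < ε') :
    oscGE (fun y => h y + s * (f' y - h y)) A q (s * ε' / 2) := by
  obtain ⟨ρ₂, hρ₂, hball⟩ := Metric.continuousWithinAt_iff.1 hc (s * ε' / 8) (by positivity)
  intro ρ hρ
  obtain ⟨u, hu, w, hw, hpair⟩ := hosc (min ρ ρ₂) (lt_min hρ hρ₂)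
  have hu' : u ∈ A ∩ Metric.ball q ρ := ⟨hu.1, Metric.ball_subset_ball (min_le_left _ _) hu.2⟩
  have hw' : w ∈ A ∩ Metric.ball q ρ := ⟨hw.1, Metric.ball_subset_ball (min_le_left _ _) hw.2⟩
  refine ⟨u, hu', w, hw', ?_⟩
  have hud : dist u q < ρ₂ := lt_of_lt_of_le hu.2 (min_le_right _ _)
  have hwd : dist w q < ρ₂ := lt_of_lt_of_le hw.2 (min_le_right _ _)
  have h1 : |h u - h q| < s * ε' / 8 := by
    have := hball hu.1 hud; rwa [Real.dist_eq] at this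
  have h2 : |h w - h q| < s * ε' / 8 := by
    have := hball hw.1 hwd; rwa [Real.dist_eq] at this
  have h3 : |h u - h w| ≤ |h u - h q| + |h w - h q| := by
    have h4 : h u - h w = (h u - h q) - (h w - h q) := by ring
    rw [h4]
    exact abs_sub _ _
  have key : (h u + s * (f' u - h u)) - (h w + s * (f' w - h w)) =
      s * (f' u - f' w) + (1 - s) * (h u - h w) := by ring
  have h5 : |s * (f' u - f' w)| = s * |f' u - f' w| := by
    rw [abs_mul, abs_of_nonneg hs0.le]
  have h6 : |(1 - s) * (h u - h w)| ≤ |h u - h w| := by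
    rw [abs_mul]
    have : |(1 - s)| ≤ 1 := by rw [abs_of_nonneg (by linarith)]; linarith
    nlinarith [abs_nonneg (h u - h w)]
  have h7 : |s * (f' u - f' w)| - |(1 - s) * (h u - h w)| ≤
      |(h u + s * (f' u - h u)) - (h w + s * (f' w - h w))| := by
    rw [key]
    have := abs_add_le (s * (f' u - f' w) + (1 - s) * (h u - h w)) (-((1 - s) * (h u - h w)))
    simp only [add_neg_cancel_right, abs_neg] at this
    linarith
  have h8 : s * ε' ≤ s * |f' u - f' w| := by nlinarith
  have hC0 : 0 < s * ε' := by positivity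
  show s * ε' / 2 ≤ |(h u + s * (f' u - h u)) - (h w + s * (f' w - h w))|
  linarith

set_option maxHeartbeats 2000000 in
theorem step_ex (hconv : Convex ℝ K)
    (hbad : ∀ V : Set X, IsOpen V → (V ∩ A).Nonempty → ∃ f ∈ K, ¬ ContinuousOn f (V ∩ A))
    (M : ℕ) (S : StC X) (hS : Inv K A M S) :
    ∃ S' : StC X, Inv K A (M + 1) S' ∧ Step K A M S S' := by
  classical
  have hhK := hS.1
  have hpow0 : (0:ℝ) < (2⁻¹ : ℝ) ^ (M + 1) := by positivity
  have hpow1 : ((2 : ℝ)⁻¹) ^ (M + 1) ≤ 1 := by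
    apply pow_le_one₀ <;> norm_num
  have hdummy2 : S.h = fun x => S.h x + 0 * (S.h x - S.h x) := by funext x; ring
  have hdummyc2 : ∃ g' ∈ K, ∃ s : ℝ, 0 ≤ s ∧ s ≤ (2⁻¹ : ℝ) ^ (M + 1) ∧
      S.h = fun x => S.h x + s * (g' x - S.h x) :=
    ⟨S.h, hhK, 0, le_refl 0, hpow0.le, hdummy2⟩
  have hdummyc3 : ∀ i p γ, S.nds i = some (p, γ) → |S.h p - S.h p| ≤ (2⁻¹ : ℝ) ^ (M + 1) := by
    intro i p γ _
    simp only [sub_self, abs_zero]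
    exact hpow0.le
  have hmem : ∀ f' : X → ℝ, f' ∈ K → ∀ s : ℝ, 0 ≤ s → s ≤ 1 →
      (fun y => S.h y + s * (f' y - S.h y)) ∈ K := by
    intro f' hf' s h0 h1
    have h2 := hconv hhK hf' (by linarith : (0:ℝ) ≤ 1 - s) h0 (by ring)
    convert h2 using 1
    funext y
    simp only [Pi.add_apply, Pi.smul_apply, smul_eq_mul]
    ring
  by_cases hn : ∀ i, S.nds i = none
  · have hold0 : ∀ (h' : X → ℝ) i p γ, S.nds i = some (p, γ) →
        oscGE h' A p (γ * (1 + (2⁻¹ : ℝ) ^ (M + 1 - i))) := by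
      intro h' i p γ hi
      rw [hn i] at hi
      cases hi
    have hc5 : ∀ (S' : StC X), (∀ i k p γ, task (M + 1) = (i, k) → S.nds i = some (p, γ) →
        (2⁻¹ : ℝ) ^ (M + 1) ≤ γ / 32 →
        ∃ q δ, S'.nds (M + 1) = some (q, δ) ∧ dist q p < 1 / (k + 1 : ℝ) ∧
          γ / 4 ≤ |S'.h q - S'.h p|) := by
      intro S' i k p γ _ hnds _
      rw [hn i] at hnds
      cases hnds
    by_cases hA : A.Nonempty
    · obtain ⟨f₁, hf₁K, hnc⟩ := hbad univ isOpen_univ (by rwa [univ_inter])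
      rw [univ_inter] at hnc
      rw [ContinuousOn] at hnc; push_neg at hnc
      obtain ⟨q, hqA, hncq⟩ := hnc
      by_cases hc : ContinuousWithinAt S.h A q
      · -- bootstrap, introducing f₁
        obtain ⟨ε', hε', hosc⟩ := oscGE_of_not_cwa hqA hncq
        set s : ℝ := (2⁻¹ : ℝ) ^ (M + 1) with hsdef
        have hs0 : 0 < s := hpow0
        have hosc' := oscGE_perturb hosc hc hs0 hpow1 hε'
        set γn : ℝ := min (s * ε' / 4) 1 with hγndef
        have hγn0 : 0 < γn := lt_min (by positivity) one_pos
        set h' : X → ℝ := fun y => S.h y + s * (f₁ y - S.h y) with hh'def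
        refine ⟨⟨h', fun i => if i = M + 1 then some (q, γn) else S.nds i⟩,
          inv_mk K A hS h' (hmem f₁ hf₁K s hs0.le hpow1) (hold0 h') _ ?_,
          ?_, ?_, ?_, ?_, hc5 _⟩
        · intro p γ hpγ
          rw [Option.some_inj, Prod.mk.injEq] at hpγ
          obtain ⟨rfl, rfl⟩ := hpγ
          refine ⟨hqA, hγn0, min_le_right _ _, oscGE_mono ?_ hosc'⟩
          have := min_le_left (s * ε' / 4) 1
          linarith
        · intro i hi
          simp only [if_neg hi]
        · exact ⟨f₁, hf₁K, s, hs0.le, le_refl _, rfl⟩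
        · intro i p γ hi
          rw [hn i] at hi
          cases hi
        · intro _ _
          exact ⟨(q, γn), by simp⟩
      · -- bootstrap, self-sustaining node at q
        obtain ⟨γn, hγn0, hγn1, hoscn⟩ := selfNode hqA hc
        refine ⟨⟨S.h, fun i => if i = M + 1 then some (q, γn) else S.nds i⟩,
          inv_mk K A hS S.h hhK (hold0 S.h) _ ?_, ?_, hdummyc2, hdummyc3, ?_, hc5 _⟩
        · intro p γ hpγ
          rw [Option.some_inj, Prod.mk.injEq] at hpγ
          obtain ⟨rfl, rfl⟩ := hpγ
          exact ⟨hqA, hγn0, hγn1, hoscn⟩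
        · intro i hi
          simp only [if_neg hi]
        · intro _ _
          exact ⟨(q, γn), by simp⟩
    · -- A empty: trivial step
      refine ⟨⟨S.h, fun i => if i = M + 1 then none else S.nds i⟩,
        inv_mk K A hS S.h hhK (hold0 S.h) none (by intro p γ h; cases h),
        ?_, hdummyc2, hdummyc3, ?_, hc5 _⟩
      · intro i hi
        simp only [if_neg hi]
      · intro _ hA'
        exact absurd hA' hA
  · -- there are nodes
    have hc4 : ∀ (S' : StC X), ((∀ i, S.nds i = none) → A.Nonempty →
        ∃ e, S'.nds (M + 1) = some e) := by
      intro S' hall _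
      exact absurd hall hn
    set ii : ℕ := (task (M + 1)).1 with hiidef
    set kk : ℕ := (task (M + 1)).2 with hkkdef
    by_cases hnode : ∃ p γ, S.nds ii = some (p, γ) ∧ (2⁻¹ : ℝ) ^ (M + 1) ≤ γ / 32
    · -- eligible witness task
      obtain ⟨p, γ, hpγ, hpowγ⟩ := hnode
      obtain ⟨hii1, hiiM, hpA, hγ0, hγ1, hoscp⟩ := hS.2.2 ii p γ hpγ
      have hfloor : oscGE S.h A p γ := by
        apply oscGE_mono _ hoscp
        have : (0:ℝ) ≤ (2⁻¹ : ℝ) ^ (M - ii) := by positivity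
        nlinarith
      set r₀ : ℝ := 1 / (2 * ((kk : ℝ) + 1)) with hr₀def
      have hr₀ : 0 < r₀ := by positivity
      have hr₀k : r₀ + r₀ ≤ 1 / ((kk : ℝ) + 1) := by
        rw [hr₀def]
        rw [← add_div]
        rw [div_le_div_iff₀ (by positivity) (by positivity)]
        ring_nf
        nlinarith [Nat.cast_nonneg (α := ℝ) kk]
      obtain ⟨u, hu, w, hw, hpair⟩ := hfloor r₀ hr₀
      have hq₀ex : ∃ q₀, (q₀ ∈ A ∩ Metric.ball p r₀) ∧ γ / 2 ≤ |S.h q₀ - S.h p| := by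
        by_cases hcase : γ / 2 ≤ |S.h u - S.h p|
        · exact ⟨u, hu, hcase⟩
        · refine ⟨w, hw, ?_⟩
          have t0 : |S.h u - S.h w| = |(S.h u - S.h p) - (S.h w - S.h p)| := by
            congr 1
            ring
          have t1 : |(S.h u - S.h p) - (S.h w - S.h p)| ≤ |S.h u - S.h p| + |S.h w - S.h p| :=
            abs_sub _ _
          rw [t0] at hpair
          linarith
      obtain ⟨q₀, hq₀m, hq₀gap⟩ := hq₀ex
      have hq₀A : q₀ ∈ A := hq₀m.1
      have hq₀ball : dist q₀ p < r₀ := hq₀m.2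
      by_cases hcq : ContinuousWithinAt S.h A q₀
      · -- perturb towards a fresh bad point
        obtain ⟨rb, hrb, hballq₀⟩ := Metric.continuousWithinAt_iff.1 hcq (γ / 8) (by positivity)
        set r₁ : ℝ := min rb r₀ with hr₁def
        have hr₁ : 0 < r₁ := lt_min hrb hr₀
        obtain ⟨f', hf'K, hncf'⟩ := hbad (Metric.ball q₀ r₁) Metric.isOpen_ball
          ⟨q₀, Metric.mem_ball_self hr₁, hq₀A⟩
        rw [ContinuousOn] at hncf'; push_neg at hncf'
        obtain ⟨q', hq'm, hncq'⟩ := hncf'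
        have hq'A : q' ∈ A := hq'm.2
        have hq'q₀ : dist q' q₀ < r₁ := hq'm.1
        obtain ⟨ε', hε', hoscf''⟩ := oscGE_of_not_cwa hq'm hncq'
        have hoscf' : oscGE f' A q' ε' := oscGE_mono_set inter_subset_right hoscf''
        have hq'h : |S.h q' - S.h q₀| < γ / 8 := by
          have := hballq₀ hq'A (lt_of_lt_of_le hq'q₀ (min_le_left _ _))
          rwa [Real.dist_eq] at this
        have hgap3 : 3 * γ / 8 ≤ |S.h q' - S.h p| := by
          have t0 : |S.h q₀ - S.h p| ≤ |S.h q₀ - S.h q'| + |S.h q' - S.h p| := by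
            have e : S.h q₀ - S.h p = (S.h q₀ - S.h q') + (S.h q' - S.h p) := by ring
            rw [e]
            exact abs_add_le _ _
          rw [abs_sub_comm (S.h q₀) (S.h q')] at t0
          linarith
        have hdistq' : dist q' p < 1 / ((kk : ℝ) + 1) := by
          have := dist_triangle q' q₀ p
          have h2 : r₁ ≤ r₀ := min_le_right _ _
          linarith
        by_cases hcq' : ContinuousWithinAt S.h A q'
        · -- THE INTRODUCTION CASE
          set v : X → ℝ := fun y => f' y - S.h y with hvdef
          set Sig : ℝ := ∑ j ∈ Finset.range (M + 1),
            ((S.nds j).elim 0 fun e => |f' e.1| + |S.h e.1|) with hSigdef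
          have hSig0 : 0 ≤ Sig := by
            apply Finset.sum_nonneg
            intro j _
            cases hj : S.nds j with
            | none => simp
            | some e => simp only [Option.elim_some]; positivity
          set εup : ℝ := min ((2⁻¹ : ℝ) ^ (M + 1) / (1 + Sig))
            (γ / (8 * (1 + |v q'| + |v p|))) with hεupdef
          have hεup0 : 0 < εup := by
            apply lt_min
            · positivity
            · positivity
          set goal : ℕ → ℝ → Prop := fun j s => ∀ p' γ', S.nds j = some (p', γ') →
            oscGE (fun y => S.h y + s * v y) A p' (γ' * (1 + (2⁻¹ : ℝ) ^ (M + 1 - j)))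
            with hgoaldef
          have hT : ∀ j ∈ Finset.range (M + 1),
              (∃ b : ℝ, 0 < b ∧ ∀ s : ℝ, 0 < s → s ≤ b → goal j s) ∨
              {s : ℝ | ¬ goal j s}.Subsingleton := by
            intro j _
            cases hjs : S.nds j with
            | none =>
              left
              exact ⟨1, one_pos, fun s _ _ p' γ' h => by rw [hjs] at h; cases h⟩
            | some e =>
              obtain ⟨p', γ'⟩ := e
              obtain ⟨_, hjM, hp'A, hγ'0, hγ'1, hoscj⟩ := hS.2.2 j p' γ' hjs
              have hMj : M + 1 - j = (M - j) + 1 := by omega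
              have hpowid : (2⁻¹ : ℝ) ^ (M - j) = 2 * (2⁻¹ : ℝ) ^ (M + 1 - j) := by
                rw [hMj, pow_succ]
                ring
              by_cases hlb : LocBdd v A p'
              · left
                obtain ⟨r, hr, C, hC⟩ := hlb
                set C' : ℝ := max C 0 with hC'def
                have hC'0 : 0 ≤ C' := le_max_right _ _
                have hC'b : ∀ z ∈ A ∩ Metric.ball p' r, |v z| ≤ C' :=
                  fun z hz => (hC z hz).trans (le_max_left _ _)
                set θ : ℝ := γ' * (1 + (2⁻¹ : ℝ) ^ (M - j)) with hθdef
                have hθ0 : 0 < θ := by positivity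
                set num : ℝ := γ' * (2⁻¹ : ℝ) ^ (M + 1 - j) with hnumdef
                have hnum0 : 0 < num := by positivity
                set D : ℝ := 1 + θ + 2 * C' with hDdef
                have hD0 : 0 < D := by positivity
                refine ⟨num / D, by positivity, fun s hs0 hsb => ?_⟩
                intro p'' γ'' heq
                rw [hjs, Option.some_inj, Prod.mk.injEq] at heq
                obtain ⟨rfl, rfl⟩ := heq
                have hmix := oscGE_mix hoscj hr hC'b hs0.le
                apply oscGE_mono _ hmix
                have hsD : s * D ≤ num := by
                  rw [← le_div_iff₀ hD0] at *
                  exact hsb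
                have h2C'D : 2 * C' ≤ D := by
                  rw [hDdef]
                  linarith
                have key : s * (2 * C') ≤ num := by
                  nlinarith
                have : θ - num = γ' * (1 + (2⁻¹ : ℝ) ^ (M + 1 - j)) := by
                  rw [hθdef, hnumdef, hpowid]
                  ring
                linarith
              · right
                have hsub : {s : ℝ | ¬ goal j s} ⊆
                    {s : ℝ | ¬ oscGE (fun y => S.h y + s * v y) A p'
                      (γ' * (1 + (2⁻¹ : ℝ) ^ (M + 1 - j)))} := by
                  intro s hs hosc1
                  apply hs
                  intro p'' γ'' heq
                  rw [hjs, Option.some_inj, Prod.mk.injEq] at heq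
                  obtain ⟨rfl, rfl⟩ := heq
                  exact hosc1
                exact (bad_unique hp'A hlb).anti hsub
          obtain ⟨s, hs0, hsεup, hgoal⟩ := exists_good_s hεup0 (Finset.range (M + 1)) goal hT
          have hsle : s ≤ (2⁻¹ : ℝ) ^ (M + 1) := by
            have h1 : εup ≤ (2⁻¹ : ℝ) ^ (M + 1) / (1 + Sig) := min_le_left _ _
            have h2 : (2⁻¹ : ℝ) ^ (M + 1) / (1 + Sig) ≤ (2⁻¹ : ℝ) ^ (M + 1) := by
              apply div_le_self hpow0.le
              linarith
            linarith
          have hs1 : s ≤ 1 := hsle.trans hpow1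
          set h' : X → ℝ := fun y => S.h y + s * (f' y - S.h y) with hh'def
          have hh'v : h' = fun y => S.h y + s * v y := rfl
          have hh'K : h' ∈ K := hmem f' hf'K s hs0.le hs1
          -- new node oscillation
          have hosc' : oscGE h' A q' (s * ε' / 2) := oscGE_perturb hoscf' hcq' hs0 hs1 hε'
          set γn : ℝ := min (s * ε' / 4) 1 with hγndef
          have hγn0 : 0 < γn := lt_min (by positivity) one_pos
          -- closeness at old nodes
          have hclose : ∀ i p' γ', S.nds i = some (p', γ') →
              |h' p' - S.h p'| ≤ (2⁻¹ : ℝ) ^ (M + 1) := by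
            intro i p' γ' hi
            have hiM' : i ≤ M := (hS.2.2 i p' γ' hi).2.1
            have habs : |h' p' - S.h p'| = s * |f' p' - S.h p'| := by
              have : h' p' - S.h p' = s * (f' p' - S.h p') := by
                simp only [hh'def]
                ring
              rw [this, abs_mul, abs_of_nonneg hs0.le]
            have hterm : |f' p' - S.h p'| ≤ Sig := by
              have h1 : |f' p' - S.h p'| ≤ |f' p'| + |S.h p'| := abs_sub _ _
              have h2 : ((S.nds i).elim 0 fun e => |f' e.1| + |S.h e.1|) ≤ Sig := by
                apply Finset.single_le_sum (f := fun j =>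
                  ((S.nds j).elim 0 fun e => |f' e.1| + |S.h e.1|))
                · intro j _
                  cases hj : S.nds j with
                  | none => simp
                  | some e => simp only [Option.elim_some]; positivity
                · exact Finset.mem_range.2 (by omega)
              rw [hi, Option.elim_some] at h2
              linarith
            have hs2 : s * (1 + Sig) ≤ (2⁻¹ : ℝ) ^ (M + 1) := by
              have h1 : s ≤ (2⁻¹ : ℝ) ^ (M + 1) / (1 + Sig) :=
                hsεup.trans (min_le_left _ _)
              rw [le_div_iff₀ (by linarith)] at h1
              linarith
            rw [habs]
            nlinarith
          -- the gap
          have hsgapbd : s * (|v q'| + |v p|) ≤ γ / 8 := by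
            have h1 : s ≤ γ / (8 * (1 + |v q'| + |v p|)) := hsεup.trans (min_le_right _ _)
            have h2 : 0 < 8 * (1 + |v q'| + |v p|) := by positivity
            rw [le_div_iff₀ h2] at h1
            nlinarith [abs_nonneg (v q'), abs_nonneg (v p), hs0.le]
          have hgap : γ / 4 ≤ |h' q' - h' p| := by
            have e1 : h' q' - h' p = (S.h q' - S.h p) + s * (v q' - v p) := by
              simp only [hh'def, hvdef]
              ring
            have e2 : |s * (v q' - v p)| ≤ s * (|v q'| + |v p|) := by
              rw [abs_mul, abs_of_nonneg hs0.le]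
              have := abs_sub (v q') (v p)
              nlinarith
            have e3 : |S.h q' - S.h p| - |s * (v q' - v p)| ≤ |h' q' - h' p| := by
              rw [e1]
              have := abs_add_le ((S.h q' - S.h p) + s * (v q' - v p)) (-(s * (v q' - v p)))
              simp only [add_neg_cancel_right, abs_neg] at this
              linarith
            linarith
          refine ⟨⟨h', fun i => if i = M + 1 then some (q', γn) else S.nds i⟩,
            inv_mk K A hS h' hh'K ?_ _ ?_, ?_, ?_, hclose, hc4 _, ?_⟩
          · intro i p' γ' hi
            have hiM' : i ≤ M := (hS.2.2 i p' γ' hi).2.1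
            have := hgoal i (Finset.mem_range.2 (by omega)) p' γ' hi
            rwa [hh'v]
          · intro p'' γ'' hpγ'
            rw [Option.some_inj, Prod.mk.injEq] at hpγ'
            obtain ⟨rfl, rfl⟩ := hpγ'
            refine ⟨hq'A, hγn0, min_le_right _ _, oscGE_mono ?_ hosc'⟩
            have := min_le_left (s * ε' / 4) 1
            linarith
          · intro i hi
            simp only [if_neg hi]
          · exact ⟨f', hf'K, s, hs0.le, hsle, rfl⟩
          · intro i k p'' γ'' htask hnds hpow
            have hieq : ii = i := by rw [hiidef, htask]
            have hkeq : kk = k := by rw [hkkdef, htask]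
            rw [← hieq] at hnds
            rw [hpγ, Option.some_inj, Prod.mk.injEq] at hnds
            obtain ⟨rfl, rfl⟩ := hnds
            refine ⟨q', γn, by simp, ?_, ?_⟩
            · rw [← hkeq]
              exact hdistq'
            · exact hgap
        · -- q' is itself a self-sustaining node; dummy step
          obtain ⟨γn, hγn0, hγn1, hoscn⟩ := selfNode hq'A hcq'
          refine ⟨⟨S.h, fun i => if i = M + 1 then some (q', γn) else S.nds i⟩,
            inv_mk K A hS S.h hhK (hold_of_eq K A hS) _ ?_,
            ?_, hdummyc2, hdummyc3, hc4 _, ?_⟩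
          · intro p'' γ'' hpγ'
            rw [Option.some_inj, Prod.mk.injEq] at hpγ'
            obtain ⟨rfl, rfl⟩ := hpγ'
            exact ⟨hq'A, hγn0, hγn1, hoscn⟩
          · intro i hi
            simp only [if_neg hi]
          · intro i k p'' γ'' htask hnds hpow
            have hieq : ii = i := by rw [hiidef, htask]
            have hkeq : kk = k := by rw [hkkdef, htask]
            rw [← hieq] at hnds
            rw [hpγ, Option.some_inj, Prod.mk.injEq] at hnds
            obtain ⟨rfl, rfl⟩ := hnds
            refine ⟨q', γn, by simp, ?_, by simpa using hgap3.trans' (by linarith)⟩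
            rw [← hkeq]
            exact hdistq'
      · -- q₀ is a self-sustaining node; dummy step
        obtain ⟨γn, hγn0, hγn1, hoscn⟩ := selfNode hq₀A hcq
        refine ⟨⟨S.h, fun i => if i = M + 1 then some (q₀, γn) else S.nds i⟩,
          inv_mk K A hS S.h hhK (hold_of_eq K A hS) _ ?_,
          ?_, hdummyc2, hdummyc3, hc4 _, ?_⟩
        · intro p'' γ'' hpγ'
          rw [Option.some_inj, Prod.mk.injEq] at hpγ'
          obtain ⟨rfl, rfl⟩ := hpγ'
          exact ⟨hq₀A, hγn0, hγn1, hoscn⟩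
        · intro i hi
          simp only [if_neg hi]
        · intro i k p'' γ'' htask hnds hpow
          have hieq : ii = i := by rw [hiidef, htask]
          have hkeq : kk = k := by rw [hkkdef, htask]
          rw [← hieq] at hnds
          rw [hpγ, Option.some_inj, Prod.mk.injEq] at hnds
          obtain ⟨rfl, rfl⟩ := hnds
          refine ⟨q₀, γn, by simp, ?_, by simpa using hq₀gap.trans' (by linarith)⟩
          rw [← hkeq]
          have h2 : r₀ < 1 / ((kk : ℝ) + 1) := by linarith
          linarith
    · -- not eligible: trivial step
      refine ⟨⟨S.h, fun i => if i = M + 1 then none else S.nds i⟩,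
        inv_mk K A hS S.h hhK (hold_of_eq K A hS) none (by intro p γ h; cases h),
        ?_, hdummyc2, hdummyc3, hc4 _, ?_⟩
      · intro i hi
        simp only [if_neg hi]
      · intro i k p γ htask hnds hpow
        exfalso
        apply hnode
        have hieq : ii = i := by rw [hiidef, htask]
        rw [hieq]
        exact ⟨p, γ, hnds, hpow⟩





noncomputable def chain (hconv : Convex ℝ K)
    (hbad : ∀ V : Set X, IsOpen V → (V ∩ A).Nonempty → ∃ f ∈ K, ¬ ContinuousOn f (V ∩ A))
    (S₀ : StC X) (h₀ : Inv K A 0 S₀) : ∀ n : ℕ, {S : StC X // Inv K A n S} :=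
  fun n => Nat.rec (motive := fun n => {S : StC X // Inv K A n S}) ⟨S₀, h₀⟩
    (fun m prev => ⟨(step_ex K A hconv hbad m prev.1 prev.2).choose,
      (step_ex K A hconv hbad m prev.1 prev.2).choose_spec.1⟩) n

theorem chain_step (hconv : Convex ℝ K)
    (hbad : ∀ V : Set X, IsOpen V → (V ∩ A).Nonempty → ∃ f ∈ K, ¬ ContinuousOn f (V ∩ A))
    (S₀ : StC X) (h₀ : Inv K A 0 S₀) (n : ℕ) :
    Step K A n (chain K A hconv hbad S₀ h₀ n).1 (chain K A hconv hbad S₀ h₀ (n + 1)).1 :=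
  (step_ex K A hconv hbad n (chain K A hconv hbad S₀ h₀ n).1
    (chain K A hconv hbad S₀ h₀ n).2).choose_spec.2

end SCPaux

open Set Filter Topology Metric SCPaux in
theorem keyL {X : Type*} [MetricSpace X] (K : Set (X → ℝ)) (hK : ∀ f ∈ K, ScatCont f)
    (hcomp : IsCompact K) (hconv : Convex ℝ K) (A : Set X) (hA : A.Nonempty) :
    ∃ V : Set X, IsOpen V ∧ (V ∩ A).Nonempty ∧ ∀ f ∈ K, ContinuousOn f (V ∩ A) := by
  classical
  by_contra hcontra
  push_neg at hcontra
  have hbad : ∀ V : Set X, IsOpen V → (V ∩ A).Nonempty → ∃ f ∈ K, ¬ ContinuousOn f (V ∩ A) := by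
    intro V hV hVA
    exact hcontra V hV hVA
  obtain ⟨f₀, hf₀K, _⟩ := hbad univ isOpen_univ (by rwa [univ_inter])
  set S₀ : StC X := ⟨f₀, fun _ => none⟩ with hS₀def
  have h₀ : Inv K A 0 S₀ := ⟨hf₀K, fun _ _ => rfl, fun i p γ h => by cases h⟩
  have main : ∃ F : ℕ → StC X, (∀ i, (F 0).nds i = none) ∧ (∀ n, Inv K A n (F n)) ∧
      (∀ n, Step K A n (F n) (F (n + 1))) :=
    ⟨fun n => (chain K A hconv hbad S₀ h₀ n).1, fun i => rfl,
      fun n => (chain K A hconv hbad S₀ h₀ n).2, fun n => chain_step K A hconv hbad S₀ h₀ n⟩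
  obtain ⟨F, hF0, hinv, hstep⟩ := main
  -- pointwise bound on K
  have hBd : ∀ x : X, ∃ C : ℝ, 0 ≤ C ∧ ∀ f ∈ K, |f x| ≤ C := by
    intro x
    have h1 : IsCompact ((fun f : X → ℝ => |f x|) '' K) := hcomp.image ((continuous_apply x).abs)
    obtain ⟨C, hC⟩ := h1.bddAbove
    refine ⟨C, ?_, fun f hf => hC ⟨f, hf, rfl⟩⟩
    have := hC ⟨f₀, hf₀K, rfl⟩
    exact (abs_nonneg _).trans this
  -- convergence of the scheme
  have hglim : ∀ x : X, ∃ l : ℝ, Tendsto (fun n => (F n).h x) atTop (𝓝 l) := by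
    intro x
    obtain ⟨C, hC0, hC⟩ := hBd x
    apply cauchySeq_tendsto_of_complete
    apply cauchySeq_of_dist_le_of_summable (fun n => (2⁻¹ : ℝ) ^ (n + 1) * (2 * C))
    · intro n
      obtain ⟨g', hg'K, s, hs0, hsle, hh⟩ := (hstep n).2.1
      have hval : (F (n + 1)).h x = (F n).h x + s * (g' x - (F n).h x) := by
        rw [hh]
      rw [Real.dist_eq, hval]
      have h1 : |(F n).h x| ≤ C := hC _ (hinv n).1
      have h2 : |g' x| ≤ C := hC _ hg'K
      have h3 : |(F n).h x - ((F n).h x + s * (g' x - (F n).h x))| = s * |g' x - (F n).h x| := by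
        rw [show (F n).h x - ((F n).h x + s * (g' x - (F n).h x)) = -(s * (g' x - (F n).h x))
          from by ring, abs_neg, abs_mul, abs_of_nonneg hs0]
      rw [h3]
      have h4 : |g' x - (F n).h x| ≤ 2 * C := by
        have := abs_sub (g' x) ((F n).h x)
        linarith
      have h5 : (0:ℝ) < (2⁻¹ : ℝ) ^ (n + 1) := by positivity
      nlinarith
    · have hgeo : Summable (fun n : ℕ => (2⁻¹ : ℝ) ^ n) :=
        summable_geometric_of_lt_one (by norm_num) (by norm_num)
      apply Summable.congr ((hgeo.mul_right (2⁻¹ * (2 * C))))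
      intro n
      rw [pow_succ]
      ring
  choose g hg using hglim
  have hgK : g ∈ K := by
    apply hcomp.isClosed.mem_of_tendsto (tendsto_pi_nhds.2 hg)
    exact Eventually.of_forall fun n => (hinv n).1
  -- persistence of nodes
  have hpers : ∀ (i : ℕ) (e : X × ℝ) (n m : ℕ), n ≤ m → (F n).nds i = some e →
      (F m).nds i = some e := by
    intro i e n m hnm h
    induction m, hnm using Nat.le_induction with
    | base => exact h
    | succ m hnm ih =>
      have hin : i ≤ n := by
        obtain ⟨p, γ⟩ := e
        exact ((hinv n).2.2 i p γ h).2.1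
      rw [(hstep m).1 i (by omega)]
      exact ih
  -- telescoping bound at node points
  have htel : ∀ (i : ℕ) (p : X) (γ : ℝ) (m : ℕ), (F m).nds i = some (p, γ) → ∀ n, m ≤ n →
      |(F n).h p - (F m).h p| ≤ (2⁻¹ : ℝ) ^ m - (2⁻¹ : ℝ) ^ n := by
    intro i p γ m hm n hn
    induction n, hn using Nat.le_induction with
    | base => simp
    | succ n hn ih =>
      have hnode : (F n).nds i = some (p, γ) := hpers i (p, γ) m n hn hm
      have h1 := (hstep n).2.2.1 i p γ hnode
      have h2 : |(F (n + 1)).h p - (F m).h p| ≤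
          |(F (n + 1)).h p - (F n).h p| + |(F n).h p - (F m).h p| := by
        rw [show (F (n + 1)).h p - (F m).h p =
          ((F (n + 1)).h p - (F n).h p) + ((F n).h p - (F m).h p) from by ring]
        exact abs_add_le _ _
      have h3 : (2⁻¹ : ℝ) ^ n = 2 * (2⁻¹ : ℝ) ^ (n + 1) := by
        rw [pow_succ]; ring
      linarith
  have htail : ∀ (i : ℕ) (p : X) (γ : ℝ) (m : ℕ), (F m).nds i = some (p, γ) →
      |g p - (F m).h p| ≤ (2⁻¹ : ℝ) ^ m := by
    intro i p γ m hm
    have h1 : Tendsto (fun n => |(F n).h p - (F m).h p|) atTop (𝓝 (|g p - (F m).h p|)) :=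
      ((hg p).sub_const _).abs
    apply le_of_tendsto h1
    filter_upwards [eventually_ge_atTop m] with n hn
    have h2 := htel i p γ m hm n hn
    have h3 : (0:ℝ) ≤ (2⁻¹ : ℝ) ^ n := by positivity
    linarith
  -- the bad set
  set Sset : Set X := {x | ∃ m i γ, (F m).nds i = some (x, γ)} with hSsetdef
  have hwit : ∀ (i : ℕ) (p : X) (γ : ℝ) (m : ℕ), (F m).nds i = some (p, γ) → ∀ k : ℕ,
      ∃ y ∈ Sset, dist y p < 1 / (k + 1 : ℝ) ∧ γ / 8 ≤ |g y - g p| := by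
    intro i p γ m hm k
    have hγ0 : 0 < γ := ((hinv m).2.2 i p γ hm).2.2.2.1
    obtain ⟨j₀, hj₀⟩ := exists_pow_lt_of_lt_one (show (0:ℝ) < γ / 32 by positivity)
      (show (2⁻¹ : ℝ) < 1 by norm_num)
    set j : ℕ := max (max (i + 1) (m + 1)) j₀ with hjdef
    set M' : ℕ := Nat.pair i (Nat.pair k j) with hM'def
    have hjM' : j ≤ M' := le_trans (Nat.right_le_pair k j) (Nat.right_le_pair i _)
    have hiM' : i + 1 ≤ M' := le_trans (le_trans (le_max_left _ _) (le_max_left _ _)) hjM'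
    have hmM' : m + 1 ≤ M' := le_trans (le_trans (le_max_right _ _) (le_max_left _ _)) hjM'
    have hpowM' : (2⁻¹ : ℝ) ^ M' ≤ γ / 32 := by
      calc (2⁻¹ : ℝ) ^ M' ≤ (2⁻¹ : ℝ) ^ j₀ := by
            apply pow_le_pow_of_le_one (by norm_num) (by norm_num)
            exact le_trans (le_max_right _ _) hjM'
      _ ≤ γ / 32 := hj₀.le
    obtain ⟨N, hN⟩ : ∃ N, M' = N + 1 := ⟨M' - 1, by omega⟩
    have htask : task M' = (i, k) := by
      simp [task, hM'def, Nat.unpair_pair]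
    have hnodeN : (F N).nds i = some (p, γ) := hpers i (p, γ) m N (by omega) hm
    obtain ⟨q, δ, hq, hqd, hqgap⟩ := (hstep N).2.2.2.2 i k p γ
      (by rw [← hN]; exact htask) hnodeN (by rw [← hN]; exact hpowM')
    have hqtail : |g q - (F (N + 1)).h q| ≤ (2⁻¹ : ℝ) ^ (N + 1) :=
      htail (N + 1) q δ (N + 1) hq
    have hptail : |g p - (F (N + 1)).h p| ≤ (2⁻¹ : ℝ) ^ (N + 1) :=
      htail i p γ (N + 1) (hpers i (p, γ) m (N + 1) (by omega) hm)
    have hpowN : (2⁻¹ : ℝ) ^ (N + 1) ≤ γ / 32 := by rw [← hN]; exact hpowM'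
    refine ⟨q, ⟨N + 1, N + 1, δ, hq⟩, hqd, ?_⟩
    have t : |(F (N + 1)).h q - (F (N + 1)).h p| ≤
        |g q - g p| + |g q - (F (N + 1)).h q| + |g p - (F (N + 1)).h p| := by
      rw [show (F (N + 1)).h q - (F (N + 1)).h p =
        ((g q - g p) - (g q - (F (N + 1)).h q)) + (g p - (F (N + 1)).h p) from by ring]
      refine (abs_add_le _ _).trans ?_
      have := abs_sub (g q - g p) (g q - (F (N + 1)).h q)
      linarith
    linarith
  -- Sset is nonempty
  obtain ⟨e, he⟩ := (hstep 0).2.2.2.1 hF0 hA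
  have hSne : Sset.Nonempty := ⟨e.1, 1, 0 + 1, e.2, by rwa [← Prod.mk.eta (p := e)] at he⟩
  -- contradiction with scattered continuity of g
  obtain ⟨a, haS, hacont⟩ := hK g hgK Sset hSne
  obtain ⟨m, i, γ, hnd⟩ := haS
  have hγ0 : 0 < γ := ((hinv m).2.2 i a γ hnd).2.2.2.1
  rw [Metric.continuousWithinAt_iff] at hacont
  obtain ⟨δ', hδ', hball⟩ := hacont (γ / 16) (by positivity)
  obtain ⟨k, hk⟩ := exists_nat_one_div_lt hδ'
  obtain ⟨y, hyS, hyd, hygap⟩ := hwit i a γ m hnd k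
  have hlt : dist y a < δ' := lt_trans hyd hk
  have := hball hyS hlt
  rw [Real.dist_eq] at this
  linarith

open Set Filter Topology Metric SCPaux in
theorem countable_cover {X : Type*} [MetricSpace X] [SecondCountableTopology X]
    (K : Set (X → ℝ)) (hK : ∀ f ∈ K, ScatCont f) (hcomp : IsCompact K) (hconv : Convex ℝ K) :
    ∃ 𝒞 : Set (Set X), 𝒞.Countable ∧ ⋃₀ 𝒞 = Set.univ ∧ ∀ C ∈ 𝒞, ∀ f ∈ K, ContinuousOn f C := by
  classical
  set 𝒰 : Set (Set X) := {U | IsOpen U ∧ ∃ 𝒞 : Set (Set X), 𝒞.Countable ∧ U ⊆ ⋃₀ 𝒞 ∧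
    ∀ C ∈ 𝒞, ∀ f ∈ K, ContinuousOn f C} with h𝒰def
  obtain ⟨T, hTc, hTsub, hTU⟩ := TopologicalSpace.isOpen_sUnion_countable 𝒰 (fun U hU => hU.1)
  choose 𝒞f hc1 hc2 hc3 using fun (U : Set X) (hU : U ∈ T) => (hTsub hU).2
  haveI : Countable ↥T := hTc.to_subtype
  set 𝒞W : Set (Set X) := ⋃ U : T, 𝒞f U.1 U.2 with h𝒞Wdef
  have h𝒞Wc : 𝒞W.Countable := countable_iUnion (fun U => hc1 U.1 U.2)
  have h𝒞Wg : ∀ C ∈ 𝒞W, ∀ f ∈ K, ContinuousOn f C := by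
    intro C hC
    obtain ⟨U, hU⟩ := mem_iUnion.1 hC
    exact hc3 U.1 U.2 C hU
  have hWsub : ⋃₀ T ⊆ ⋃₀ 𝒞W := by
    intro x hx
    obtain ⟨U, hUT, hxU⟩ := hx
    obtain ⟨C, hC, hxC⟩ := hc2 U hUT hxU
    exact ⟨C, mem_iUnion.2 ⟨⟨U, hUT⟩, hC⟩, hxC⟩
  have hempty : (⋃₀ T)ᶜ = ∅ := by
    by_contra hne
    have hA : ((⋃₀ T)ᶜ : Set X).Nonempty := nonempty_iff_ne_empty.2 hne
    obtain ⟨V, hVopen, hVne, hVgood⟩ := keyL K hK hcomp hconv _ hA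
    have hmem : V ∪ ⋃₀ T ∈ 𝒰 := by
      refine ⟨hVopen.union (isOpen_sUnion (fun U hU => (hTsub hU).1)), insert (V ∩ (⋃₀ T)ᶜ) 𝒞W,
        h𝒞Wc.insert _, ?_, ?_⟩
      · intro x hx
        rcases hx with hxV | hxT
        · by_cases hxW : x ∈ ⋃₀ T
          · obtain ⟨C, hC, hxC⟩ := hWsub hxW
            exact ⟨C, mem_insert_of_mem _ hC, hxC⟩
          · exact ⟨V ∩ (⋃₀ T)ᶜ, mem_insert _ _, hxV, hxW⟩
        · obtain ⟨C, hC, hxC⟩ := hWsub hxT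
          exact ⟨C, mem_insert_of_mem _ hC, hxC⟩
      · intro C hC
        rcases mem_insert_iff.1 hC with rfl | hC'
        · exact hVgood
        · exact h𝒞Wg C hC'
    have hsub2 : V ∪ ⋃₀ T ⊆ ⋃₀ T :=
      le_of_le_of_eq (subset_sUnion_of_mem hmem) hTU.symm
    obtain ⟨x, hxV, hxA⟩ := hVne
    exact hxA (hsub2 (Or.inl hxV))
  refine ⟨𝒞W, h𝒞Wc, ?_, h𝒞Wg⟩
  apply eq_univ_of_univ_subset
  intro x _
  apply hWsub
  have : (⋃₀ T : Set X) = Set.univ := by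
    rw [← compl_empty_iff, hempty]
  rw [this]
  exact mem_univ x

open Set Filter Topology Metric SCPaux in
theorem sep_points {X : Type*} [MetricSpace X] [SecondCountableTopology X]
    (K : Set (X → ℝ)) (𝒞 : Set (Set X)) (h𝒞c : 𝒞.Countable) (h𝒞u : ⋃₀ 𝒞 = Set.univ)
    (h𝒞g : ∀ C ∈ 𝒞, ∀ f ∈ K, ContinuousOn f C) :
    ∃ Sd : Set X, Sd.Countable ∧ ∀ f ∈ K, ∀ g ∈ K, EqOn f g Sd → f = g := by
  classical
  obtain ⟨B, hBc, _, hBbasis⟩ := TopologicalSpace.exists_countable_basis X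
  haveI : Countable ↥𝒞 := h𝒞c.to_subtype
  haveI : Countable ↥B := hBc.to_subtype
  set Sd : Set X := ⋃ (C : ↥𝒞) (b : ↥B),
    (if h : ((C : Set X) ∩ b).Nonempty then {h.some} else ∅ : Set X) with hSddef
  have hSdc : Sd.Countable := by
    apply countable_iUnion
    intro C
    apply countable_iUnion
    intro b
    split_ifs
    · exact countable_singleton _
    · exact countable_empty
  refine ⟨Sd, hSdc, ?_⟩
  intro f hf g hg hEq
  funext x
  have hxC : ∃ C ∈ 𝒞, x ∈ C := by
    have : x ∈ ⋃₀ 𝒞 := by rw [h𝒞u]; exact mem_univ x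
    exact this
  obtain ⟨C, hC, hxC⟩ := hxC
  -- x is in the closure of Sd ∩ C
  have hclos : x ∈ closure (Sd ∩ C) := by
    rw [_root_.mem_closure_iff]
    intro o ho hxo
    obtain ⟨b, hbB, hxb, hbo⟩ := hBbasis.exists_subset_of_mem_open hxo ho
    have hne : ((C : Set X) ∩ b).Nonempty := ⟨x, hxC, hxb⟩
    refine ⟨hne.some, ?_, ?_, hne.some_mem.1⟩
    · exact hbo hne.some_mem.2
    · exact mem_iUnion.2 ⟨⟨C, hC⟩, mem_iUnion.2 ⟨⟨b, hbB⟩, by rw [dif_pos hne]; rfl⟩⟩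
  have hNeBot : (𝓝[Sd ∩ C] x).NeBot := mem_closure_iff_nhdsWithin_neBot.1 hclos
  have hf1 : Tendsto f (𝓝[Sd ∩ C] x) (𝓝 (f x)) :=
    ((h𝒞g C hC f hf x hxC).mono inter_subset_right)
  have hg1 : Tendsto g (𝓝[Sd ∩ C] x) (𝓝 (g x)) :=
    ((h𝒞g C hC g hg x hxC).mono inter_subset_right)
  have hfg : f =ᶠ[𝓝[Sd ∩ C] x] g :=
    eventuallyEq_of_mem self_mem_nhdsWithin (fun y hy => hEq hy.1)
  exact tendsto_nhds_unique (hf1.congr' hfg) hg1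

theorem stmt5' {X : Type*} [TopologicalSpace X] [TopologicalSpace.MetrizableSpace X]
    [TopologicalSpace.SeparableSpace X]
    (K : Set (X → ℝ)) (hK : ∀ f ∈ K, ScatCont f)
    (hcomp : IsCompact K) (hconv : Convex ℝ K) :
    TopologicalSpace.MetrizableSpace K := by
  letI : MetricSpace X := TopologicalSpace.metrizableSpaceMetric X
  haveI : SecondCountableTopology X :=
    UniformSpace.secondCountable_of_separable X
  obtain ⟨𝒞, h𝒞c, h𝒞u, h𝒞g⟩ := countable_cover K hK hcomp hconv
  obtain ⟨Sd, hSdc, hSdinj⟩ := sep_points K 𝒞 h𝒞c h𝒞u h𝒞g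
  haveI : Countable ↥Sd := hSdc.to_subtype
  have hΦc : Continuous (fun f : ↥K => (fun s : ↥Sd => (f : X → ℝ) s.1)) :=
    continuous_pi fun s => (continuous_apply (s : X)).comp continuous_subtype_val
  have hΦi : Function.Injective (fun f : ↥K => (fun s : ↥Sd => (f : X → ℝ) s.1)) := by
    intro f g h
    apply Subtype.ext
    apply hSdinj f.1 f.2 g.1 g.2
    intro x hx
    exact congrFun h ⟨x, hx⟩
  haveI : CompactSpace ↥K := isCompact_iff_compactSpace.1 hcomp
  haveI : TopologicalSpace.MetrizableSpace (↥Sd → ℝ) := UniformSpace.metrizableSpace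
  exact (hΦc.isClosedEmbedding hΦi).toIsEmbedding.metrizableSpace

/-- For a metrizable separable space `X`, each compact convex subset `K` of `SC_p(X)`
is metrizable. -/
theorem stmt5 {X : Type*} [TopologicalSpace X] [TopologicalSpace.MetrizableSpace X]
    [TopologicalSpace.SeparableSpace X]
    (K : Set (X → ℝ)) (hK : ∀ f ∈ K, ScatCont f)
    (hcomp : IsCompact K) (hconv : Convex ℝ K) :
    TopologicalSpace.MetrizableSpace K := by
  exact stmt5' K hK hcomp hconv
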